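/- If ρ is a separable state on H = H_A ⊗ H_B with operator Schmidt coefficients {μ_a}_{a=1}^{d}, then for every 1 ≤ l ≤ d the elementary symmetric polynomial of degree l in the Schmidt coefficients satisfies M^[l](|ρ̃|) = Σ_{a_1 < a_2 < … < a_l} μ_{a_1} μ_{a_2} ⋯ μ_{a_l} ≤ C(d, l) · (1/d)^l, where C(d,l) is the binomial coefficient. -/

import Mathlib

open scoped Kronecker ComplexOrder
open Matrix Finset

/-- Hilbert-Schmidt inner product on matrices. -/
noncomputable def hsInner {n : Type*} [Fintype n] (A B : Matrix n n ℂ) : ℂ :=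
  (Aᴴ * B).trace

/-- Hilbert-Schmidt norm. -/
noncomputable def hsNorm {n : Type*} [Fintype n] (A : Matrix n n ℂ) : ℝ :=
  Real.sqrt (hsInner A A).re

/-- A density operator: positive semidefinite with unit trace. -/
def IsDensity {n : Type*} [Fintype n] (ρ : Matrix n n ℂ) : Prop :=
  ρ.PosSemidef ∧ ρ.trace = 1

/-- A separable bipartite state: a convex combination of product density operators. -/
def IsSeparableState {NA NB : ℕ} (ρ : Matrix (Fin NA × Fin NB) (Fin NA × Fin NB) ℂ) : Prop :=
  ∃ (m : ℕ) (p : Fin m → ℝ)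
    (ρA : Fin m → Matrix (Fin NA) (Fin NA) ℂ) (ρB : Fin m → Matrix (Fin NB) (Fin NB) ℂ),
    (∀ i, 0 < p i) ∧ (∑ i, p i = 1) ∧ (∀ i, IsDensity (ρA i)) ∧ (∀ i, IsDensity (ρB i)) ∧
    ρ = ∑ i, (p i : ℂ) • (ρA i ⊗ₖ ρB i)

/-- An operator Schmidt decomposition of a bipartite operator `C`:
`C = ∑ a, μ a • (E a ⊗ₖ F a)` with `μ a ≥ 0` and `E`, `F` orthonormal families
with respect to the Hilbert-Schmidt inner product. -/
def SchmidtDecomp {NA NB : ℕ} (C : Matrix (Fin NA × Fin NB) (Fin NA × Fin NB) ℂ)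
    (μ : Fin (min (NA ^ 2) (NB ^ 2)) → ℝ)
    (E : Fin (min (NA ^ 2) (NB ^ 2)) → Matrix (Fin NA) (Fin NA) ℂ)
    (F : Fin (min (NA ^ 2) (NB ^ 2)) → Matrix (Fin NB) (Fin NB) ℂ) : Prop :=
  (∀ a, 0 ≤ μ a) ∧
  (∀ a b, hsInner (E a) (E b) = if a = b then 1 else 0) ∧
  (∀ a b, hsInner (F a) (F b) = if a = b then 1 else 0) ∧
  C = ∑ a, (μ a : ℂ) • (E a ⊗ₖ F a)

set_option linter.unusedSectionVars false
set_option linter.unusedVariables false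

open Finset

section Comb
variable {ι : Type*} [DecidableEq ι] (x : ι → ℝ)

/-- elementary symmetric function over a finset -/
noncomputable def esym10 (t : Finset ι) (k : ℕ) : ℝ :=
  ∑ s ∈ t.powersetCard k, ∏ a ∈ s, x a

lemma esym10_zero (t : Finset ι) : esym10 x t 0 = 1 := by simp [esym10]

lemma esym10_nonneg (hx : ∀ a, 0 ≤ x a) (t : Finset ι) (k : ℕ) : 0 ≤ esym10 x t k :=
  Finset.sum_nonneg fun s _ => Finset.prod_nonneg fun a _ => hx a

lemma esym10_insert {b : ι} {t : Finset ι} (hb : b ∉ t) (k : ℕ) :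
    esym10 x (insert b t) (k + 1) = esym10 x t (k + 1) + x b * esym10 x t k := by
  unfold esym10
  rw [Finset.powersetCard_succ_insert hb, Finset.sum_union, Finset.sum_image]
  · congr 1
    rw [Finset.mul_sum]
    refine Finset.sum_congr rfl fun s hs => ?_
    rw [Finset.mem_powersetCard] at hs
    rw [Finset.prod_insert (fun hmem => hb (hs.1 hmem))]
  · intro s hs u hu hsu
    rw [Finset.mem_coe, Finset.mem_powersetCard] at hs hu
    have hbs : b ∉ s := fun h => hb (hs.1 h)
    have hbu : b ∉ u := fun h => hb (hu.1 h)
    rw [← Finset.erase_insert hbs, hsu, Finset.erase_insert hbu]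
  · rw [Finset.disjoint_right]
    rintro s hs hs'
    simp only [Finset.mem_image] at hs
    obtain ⟨u, hu, rfl⟩ := hs
    rw [Finset.mem_powersetCard] at hs'
    exact hb (hs'.1 (Finset.mem_insert_self b u))

lemma esym10_erase {a : ι} {t : Finset ι} (ha : a ∈ t) (k : ℕ) :
    esym10 x t (k + 1) = esym10 x (t.erase a) (k + 1) + x a * esym10 x (t.erase a) k := by
  conv_lhs => rw [← Finset.insert_erase ha]
  rw [esym10_insert x (Finset.notMem_erase a t) k]

lemma mul_esym10_erase_eq {a : ι} {t : Finset ι} (ha : a ∈ t) (k : ℕ) :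
    x a * esym10 x (t.erase a) k
      = ∑ s ∈ (t.powersetCard (k + 1)).filter (fun s => a ∈ s), ∏ b ∈ s, x b := by
  unfold esym10
  rw [Finset.mul_sum]
  refine Finset.sum_nbij' (fun s => insert a s) (fun s => s.erase a) ?_ ?_ ?_ ?_ ?_
  · intro s hs
    rw [Finset.mem_powersetCard] at hs
    have has : a ∉ s := fun h => (Finset.notMem_erase a t) (hs.1 h)
    simp only [Finset.mem_filter, Finset.mem_powersetCard]
    refine ⟨⟨?_, ?_⟩, Finset.mem_insert_self a s⟩
    · intro b hb
      rcases Finset.mem_insert.mp hb with rfl | hb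
      · exact ha
      · exact Finset.mem_of_mem_erase (hs.1 hb)
    · rw [Finset.card_insert_of_notMem has, hs.2]
  · intro s hs
    simp only [Finset.mem_filter, Finset.mem_powersetCard] at hs
    rw [Finset.mem_powersetCard]
    constructor
    · exact fun b hb => Finset.mem_erase.mpr ⟨Finset.ne_of_mem_erase hb, hs.1.1 (Finset.mem_of_mem_erase hb)⟩
    · rw [Finset.card_erase_of_mem hs.2, hs.1.2]
      simp
  · intro s hs
    rw [Finset.mem_powersetCard] at hs
    exact Finset.erase_insert (fun h => (Finset.notMem_erase a t) (hs.1 h))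
  · intro s hs
    simp only [Finset.mem_filter] at hs
    exact Finset.insert_erase hs.2
  · intro s hs
    rw [Finset.mem_powersetCard] at hs
    rw [Finset.prod_insert (fun h => (Finset.notMem_erase a t) (hs.1 h))]

lemma sum_mul_esym10_erase (t : Finset ι) (k : ℕ) :
    ∑ a ∈ t, x a * esym10 x (t.erase a) k = (k + 1 : ℝ) * esym10 x t (k + 1) := by
  have h1 : ∀ a ∈ t, x a * esym10 x (t.erase a) k
      = ∑ s ∈ t.powersetCard (k + 1), (if a ∈ s then ∏ b ∈ s, x b else 0) := by
    intro a ha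
    rw [mul_esym10_erase_eq x ha k, Finset.sum_filter]
  rw [Finset.sum_congr rfl h1, Finset.sum_comm]
  unfold esym10
  rw [Finset.mul_sum]
  refine Finset.sum_congr rfl fun s hs => ?_
  rw [Finset.mem_powersetCard] at hs
  rw [Finset.sum_ite_mem, Finset.inter_eq_right.mpr hs.1, Finset.sum_const, hs.2, nsmul_eq_mul]
  push_cast; ring

end Comb

section Main
variable {ι : Type*} [DecidableEq ι] (x : ι → ℝ)

lemma esym10_monovaryOn (hx : ∀ a, 0 ≤ x a) (t : Finset ι) (m : ℕ) :
    MonovaryOn (fun a => x a * esym10 x (t.erase a) m) x (t : Set ι) := by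
  intro i hi j hj hij
  simp only [Finset.mem_coe] at hi hj
  have hne : i ≠ j := by rintro rfl; exact lt_irrefl _ hij
  cases m with
  | zero =>
    simp only [esym10_zero, mul_one]
    exact le_of_lt hij
  | succ r =>
    have hji : j ∈ t.erase i := Finset.mem_erase.mpr ⟨hne.symm, hj⟩
    have hij' : i ∈ t.erase j := Finset.mem_erase.mpr ⟨hne, hi⟩
    show x i * esym10 x (t.erase i) (r + 1) ≤ x j * esym10 x (t.erase j) (r + 1)
    rw [esym10_erase x hji r, esym10_erase x hij' r, Finset.erase_right_comm]
    have h1 := esym10_nonneg x hx ((t.erase j).erase i) (r + 1)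
    have h2 := esym10_nonneg x hx ((t.erase j).erase i) r
    nlinarith [hx i, hx j]

lemma esym10_main_bound (hx : ∀ a, 0 ≤ x a) (t : Finset ι) :
    ∀ l : ℕ, 1 ≤ l → l ≤ t.card →
      esym10 x t l ≤ (t.card.choose l : ℝ) * ((∑ a ∈ t, x a) / t.card) ^ l := by
  intro l hl
  induction l, hl using Nat.le_induction with
  | base =>
    intro h1
    have hn0 : (0:ℝ) < t.card := by exact_mod_cast Nat.lt_of_lt_of_le Nat.zero_lt_one h1
    have he1 : esym10 x t 1 = ∑ a ∈ t, x a := by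
      have := sum_mul_esym10_erase x t 0
      simp only [esym10_zero, mul_one] at this
      norm_num at this
      linarith [this]
    rw [he1, Nat.choose_one_right, pow_one]
    rw [mul_div_cancel₀ _ (ne_of_gt hn0)]
  | succ l hl1 IH =>
    intro hcard
    have hl' : l ≤ t.card := le_trans (Nat.le_succ l) hcard
    obtain ⟨m, rfl⟩ : ∃ m, l = m + 1 := ⟨l - 1, by omega⟩
    set n := t.card with hn
    set S := ∑ a ∈ t, x a with hSdef
    have hS : 0 ≤ S := Finset.sum_nonneg fun a _ => hx a
    have hn0 : (0:ℝ) < n := by exact_mod_cast Nat.lt_of_lt_of_le (by omega) hcard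
    set T := ∑ a ∈ t, x a * (x a * esym10 x (t.erase a) m) with hT
    -- Chebyshev : S * (∑ g) ≤ n * ∑ g * x  where g a = x a * esym (erase a) m
    have cheb0 := (esym10_monovaryOn x hx t m).sum_mul_sum_le_card_mul_sum
    -- cheb0 : (∑ a ∈ t, x a * esym10 x (t.erase a) m) * S ≤ n * ∑ a ∈ t, (x a * esym10 x (t.erase a) m) * x a
    have hkey3 := sum_mul_esym10_erase x t m
    have hkey1 := sum_mul_esym10_erase x t (m + 1)
    have hTsum : (∑ a ∈ t, x a * esym10 x (t.erase a) m * x a) = T := by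
      rw [hT]; exact Finset.sum_congr rfl fun a _ => by ring
    rw [hkey3, hTsum] at cheb0
    -- cheb0 : (m+1) * esym t (m+1) * S ≤ n * T
    -- identity : (m+2) * esym t (m+2) = S * esym t (m+1) - T
    push_cast at hkey1
    have hid : ((m:ℝ) + 1 + 1) * esym10 x t (m + 1 + 1) = S * esym10 x t (m + 1) - T := by
      rw [← hkey1, hT, hSdef, Finset.sum_mul, ← Finset.sum_sub_distrib]
      refine Finset.sum_congr rfl fun a ha => ?_
      rw [esym10_erase x ha m]
      ring
    -- now conclude
    have hstep : ((m:ℝ) + 1 + 1) * esym10 x t (m + 1 + 1)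
        ≤ S * esym10 x t (m + 1) * (((n:ℝ) - (m + 1)) / n) := by
      rw [hid]
      have cheb1 : ((m:ℝ) + 1) * esym10 x t (m + 1) * S ≤ (n:ℝ) * T := cheb0
      have hTlb : S * ((m + 1 : ℝ) * esym10 x t (m + 1)) / n ≤ T := by
        rw [div_le_iff₀ hn0]
        nlinarith [cheb1]
      have : S * esym10 x t (m + 1) - T ≤ S * esym10 x t (m+1) - S * ((m + 1 : ℝ) * esym10 x t (m + 1)) / n :=
        by linarith
      refine le_trans this (le_of_eq ?_)
      field_simp
    have hcoef : (0:ℝ) ≤ S * (((n:ℝ) - (m + 1)) / n) / ((m:ℝ) + 1 + 1) := by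
      have : ((m:ℝ) + 1) ≤ n := by exact_mod_cast le_trans (Nat.le_succ _) hcard
      have h2 : (0:ℝ) ≤ ((n:ℝ) - (m + 1)) := by
        have h3 : ((m:ℝ) + 1 + 1) ≤ n := by exact_mod_cast hcard
        linarith
      have := div_nonneg (mul_nonneg hS (div_nonneg h2 (le_of_lt hn0))) (by positivity : (0:ℝ) ≤ (m:ℝ)+1+1)
      exact this
    have hfin : esym10 x t (m + 1 + 1)
        ≤ (S * (((n:ℝ) - (m + 1)) / n) / ((m:ℝ) + 1 + 1)) * esym10 x t (m + 1) := by
      rw [div_mul_eq_mul_div, le_div_iff₀ (by positivity : (0:ℝ) < (m:ℝ)+1+1)]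
      calc esym10 x t (m + 1 + 1) * ((m:ℝ)+1+1) = ((m:ℝ) + 1 + 1) * esym10 x t (m + 1 + 1) := by ring
        _ ≤ S * esym10 x t (m + 1) * (((n:ℝ) - (m + 1)) / n) := hstep
        _ = S * (((n:ℝ) - (m + 1)) / n) * esym10 x t (m + 1) := by ring
    have hIH := IH hl'
    have hfin2 : esym10 x t (m + 1 + 1)
        ≤ (S * (((n:ℝ) - (m + 1)) / n) / ((m:ℝ) + 1 + 1)) * ((n.choose (m + 1) : ℝ) * (S / n) ^ (m + 1)) :=
      le_trans hfin (mul_le_mul_of_nonneg_left hIH hcoef)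
    refine le_trans hfin2 (le_of_eq ?_)
    have hchoose : ((n.choose (m + 1 + 1)) : ℝ) * ((m:ℝ) + 1 + 1) = (n.choose (m + 1) : ℝ) * ((n:ℝ) - (m + 1)) := by
      have := Nat.choose_succ_right_eq n (m + 1)
      have hcast : ((n.choose (m + 1) * (n - (m+1)) : ℕ) : ℝ) = (n.choose (m+1) : ℝ) * ((n:ℝ) - (m+1)) := by
        push_cast [Nat.cast_sub hl']
        ring
      calc ((n.choose (m + 1 + 1)) : ℝ) * ((m:ℝ) + 1 + 1)
          = ((n.choose (m + 1 + 1) * (m + 1 + 1) : ℕ) : ℝ) := by push_cast; ring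
        _ = ((n.choose (m + 1) * (n - (m+1)) : ℕ) : ℝ) := by rw [this]
        _ = _ := hcast
    have hC' : (n.choose (m+1+1) : ℝ) = (n.choose (m+1):ℝ) * ((n:ℝ)-(m+1)) / ((m:ℝ)+1+1) := by
      rw [eq_div_iff (by positivity : ((m:ℝ)+1+1) ≠ 0)]
      exact hchoose
    rw [hC']
    have hn0ne : (n:ℝ) ≠ 0 := ne_of_gt hn0
    rw [div_pow, div_pow]
    field_simp
    ring
end Main




section HS
variable {n : Type*} [Fintype n]

lemma hsInner_eq_sum (A B : Matrix n n ℂ) :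
    hsInner A B = ∑ i, ∑ j, (starRingEnd ℂ) (A j i) * B j i := by
  simp [hsInner, Matrix.trace, Matrix.diag, Matrix.mul_apply, Matrix.conjTranspose_apply]

lemma hsInner_conj (A B : Matrix n n ℂ) : hsInner A B = star (hsInner B A) := by
  rw [hsInner_eq_sum, hsInner_eq_sum, star_sum]
  refine Finset.sum_congr rfl fun i _ => ?_
  rw [star_sum]
  refine Finset.sum_congr rfl fun j _ => ?_
  simp [mul_comm]

lemma hsInner_smul_right (c : ℂ) (A B : Matrix n n ℂ) :
    hsInner A (c • B) = c * hsInner A B := by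
  simp [hsInner, Matrix.mul_smul, smul_eq_mul]

lemma hsInner_smul_left (c : ℂ) (A B : Matrix n n ℂ) :
    hsInner (c • A) B = star c * hsInner A B := by
  simp [hsInner, Matrix.conjTranspose_smul, Matrix.smul_mul, smul_eq_mul]

lemma hsInner_sum_right {κ : Type*} (s : Finset κ) (f : κ → Matrix n n ℂ) (A : Matrix n n ℂ) :
    hsInner A (∑ i ∈ s, f i) = ∑ i ∈ s, hsInner A (f i) := by
  simp [hsInner, Matrix.mul_sum]

lemma hsInner_sum_left {κ : Type*} (s : Finset κ) (f : κ → Matrix n n ℂ) (A : Matrix n n ℂ) :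
    hsInner (∑ i ∈ s, f i) A = ∑ i ∈ s, hsInner (f i) A := by
  simp [hsInner, Matrix.conjTranspose_sum, Matrix.sum_mul]

lemma hsInner_sub_left (A B C : Matrix n n ℂ) :
    hsInner (A - B) C = hsInner A C - hsInner B C := by
  simp [hsInner, Matrix.conjTranspose_sub, Matrix.sub_mul]

lemma hsInner_sub_right (A B C : Matrix n n ℂ) :
    hsInner A (B - C) = hsInner A B - hsInner A C := by
  simp [hsInner, Matrix.mul_sub]

lemma hsInner_self_re (A : Matrix n n ℂ) :
    (hsInner A A).re = ∑ i, ∑ j, Complex.normSq (A j i) := by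
  rw [hsInner_eq_sum]
  rw [Complex.re_sum]
  refine Finset.sum_congr rfl fun i _ => ?_
  rw [Complex.re_sum]
  refine Finset.sum_congr rfl fun j _ => ?_
  have : (starRingEnd ℂ) (A j i) * A j i = (Complex.normSq (A j i) : ℂ) := by
    rw [← Complex.normSq_eq_conj_mul_self]
  rw [this, Complex.ofReal_re]

lemma hsInner_self_re_nonneg (A : Matrix n n ℂ) : 0 ≤ (hsInner A A).re := by
  rw [hsInner_self_re]
  exact Finset.sum_nonneg fun i _ => Finset.sum_nonneg fun j _ => Complex.normSq_nonneg _

lemma bessel10 {k : ℕ} (E : Fin k → Matrix n n ℂ)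
    (hE : ∀ a b, hsInner (E a) (E b) = if a = b then 1 else 0) (A : Matrix n n ℂ) :
    ∑ a, Complex.normSq (hsInner (E a) A) ≤ (hsInner A A).re := by
  set c : Fin k → ℂ := fun a => hsInner (E a) A with hc
  set B : Matrix n n ℂ := ∑ a, c a • E a with hB
  have hAB : hsInner A B = ∑ a, (Complex.normSq (c a) : ℂ) := by
    rw [hB, hsInner_sum_right]
    refine Finset.sum_congr rfl fun a _ => ?_
    rw [hsInner_smul_right, hsInner_conj A (E a)]
    exact Complex.mul_conj (c a)
  have hEB : ∀ a, hsInner (E a) B = c a := by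
    intro a
    rw [hB, hsInner_sum_right]
    simp only [hsInner_smul_right, hE]
    simp
  have hBA : hsInner B A = ∑ a, (Complex.normSq (c a) : ℂ) := by
    rw [hB, hsInner_sum_left]
    refine Finset.sum_congr rfl fun a _ => ?_
    rw [hsInner_smul_left]
    exact (Complex.normSq_eq_conj_mul_self (z := c a)).symm
  have hBB : hsInner B B = ∑ a, (Complex.normSq (c a) : ℂ) := by
    conv_lhs => rw [hB]
    rw [hsInner_sum_left]
    refine Finset.sum_congr rfl fun a _ => ?_
    rw [hsInner_smul_left, hEB a]
    exact (Complex.normSq_eq_conj_mul_self (z := c a)).symm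
  have hexp : hsInner (A - B) (A - B)
      = hsInner A A - ∑ a, (Complex.normSq (c a) : ℂ) := by
    rw [hsInner_sub_left, hsInner_sub_right, hsInner_sub_right, hAB, hBA, hBB]
    ring
  have h0 := hsInner_self_re_nonneg (A - B)
  rw [hexp] at h0
  rw [Complex.sub_re, Complex.re_sum] at h0
  simp only [Complex.ofReal_re] at h0
  linarith

end HS

section Kron
variable {p q : Type*} [Fintype p] [Fintype q]

lemma conjTranspose_kron (A : Matrix p p ℂ) (B : Matrix q q ℂ) :
    (A ⊗ₖ B)ᴴ = Aᴴ ⊗ₖ Bᴴ := by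
  ext ⟨i, j⟩ ⟨k, l⟩
  simp [Matrix.conjTranspose_apply, Matrix.kroneckerMap_apply, star_mul']

lemma hsInner_kron (A C : Matrix p p ℂ) (B D : Matrix q q ℂ) :
    hsInner (A ⊗ₖ B) (C ⊗ₖ D) = hsInner A C * hsInner B D := by
  rw [hsInner, hsInner, hsInner, conjTranspose_kron, ← Matrix.mul_kronecker_mul,
    Matrix.trace_kronecker]

end Kron

section Density
variable {p : Type*} [Fintype p] [DecidableEq p]

lemma density_hsInner_le_one {ρ : Matrix p p ℂ} (h : ρ.PosSemidef) (ht : ρ.trace = 1) :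
    (hsInner ρ ρ).re ≤ 1 := by
  have hherm : ρ.IsHermitian := h.1
  set V : Matrix p p ℂ := (hherm.eigenvectorUnitary : Matrix p p ℂ) with hV
  set D : Matrix p p ℂ := Matrix.diagonal (RCLike.ofReal ∘ hherm.eigenvalues) with hD
  have hspec : ρ = V * D * star V := hherm.spectral_theorem
  have hVV : star V * V = 1 := by
    have := hherm.eigenvectorUnitary.2
    exact Matrix.mem_unitaryGroup_iff'.mp this
  have htrVMV : ∀ M : Matrix p p ℂ, (V * M * star V).trace = M.trace := by
    intro M
    rw [Matrix.trace_mul_cycle, hVV, Matrix.one_mul]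
  have htrD : D.trace = ∑ i, (hherm.eigenvalues i : ℂ) := by
    rw [hD, Matrix.trace_diagonal]
    rfl
  have htr1 : ∑ i, hherm.eigenvalues i = 1 := by
    have h1 : ρ.trace = D.trace := by
      rw [hspec, htrVMV]
    rw [ht, htrD] at h1
    have := congrArg Complex.re h1.symm
    simpa [Complex.re_sum] using this
  have htr2 : (ρ * ρ).trace = ∑ i, ((hherm.eigenvalues i : ℂ))^2 := by
    have hmul : ρ * ρ = V * (D * D) * star V := by
      rw [hspec]
      calc V * D * star V * (V * D * star V) = V * (D * (star V * V) * D) * star V := by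
            noncomm_ring
        _ = V * (D * D) * star V := by rw [hVV, Matrix.mul_one]
    rw [hmul, htrVMV]
    rw [hD, Matrix.diagonal_mul_diagonal, Matrix.trace_diagonal]
    simp [sq]
  have hsre : (hsInner ρ ρ).re = ∑ i, (hherm.eigenvalues i)^2 := by
    rw [hsInner, show ρᴴ = ρ from hherm, htr2, Complex.re_sum]
    refine Finset.sum_congr rfl fun i _ => ?_
    rw [← Complex.ofReal_pow, Complex.ofReal_re]
  rw [hsre]
  have hnn := fun i => h.eigenvalues_nonneg i
  have hle1 : ∀ i, hherm.eigenvalues i ≤ 1 := by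
    intro i
    rw [← htr1]
    exact Finset.single_le_sum (fun j _ => hnn j) (Finset.mem_univ i)
  calc ∑ i, (hherm.eigenvalues i)^2 ≤ ∑ i, hherm.eigenvalues i :=
        Finset.sum_le_sum fun i _ => by nlinarith [hnn i, hle1 i]
    _ = 1 := htr1
end Density

lemma cauchy10 {k : ℕ} (c d : Fin k → ℂ)
    (hc : ∑ a, Complex.normSq (c a) ≤ 1) (hd : ∑ a, Complex.normSq (d a) ≤ 1) :
    (∑ a, c a * d a).re ≤ 1 := by
  have h1 : (∑ a, c a * d a).re ≤ ‖∑ a, c a * d a‖ := Complex.re_le_norm _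
  have h2 : ‖∑ a, c a * d a‖ ≤ ∑ a, ‖c a‖ * ‖d a‖ := by
    refine le_trans (norm_sum_le _ _) (le_of_eq ?_)
    exact Finset.sum_congr rfl fun a _ => norm_mul _ _
  have h3 : (∑ a, ‖c a‖ * ‖d a‖) ^ 2 ≤ (∑ a, ‖c a‖ ^ 2) * ∑ a, ‖d a‖ ^ 2 :=
    Finset.sum_mul_sq_le_sq_mul_sq _ _ _
  have h4 : (∑ a, ‖c a‖ ^ 2) = ∑ a, Complex.normSq (c a) := by
    refine Finset.sum_congr rfl fun a _ => ?_
    rw [Complex.sq_norm]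
  have h5 : (∑ a, ‖d a‖ ^ 2) = ∑ a, Complex.normSq (d a) := by
    refine Finset.sum_congr rfl fun a _ => ?_
    rw [Complex.sq_norm]
  have h6 : 0 ≤ ∑ a, ‖c a‖ * ‖d a‖ :=
    Finset.sum_nonneg fun a _ => mul_nonneg (norm_nonneg _) (norm_nonneg _)
  have h7 : 0 ≤ ∑ a, Complex.normSq (c a) := Finset.sum_nonneg fun a _ => Complex.normSq_nonneg _
  have h8 : 0 ≤ ∑ a, Complex.normSq (d a) := Finset.sum_nonneg fun a _ => Complex.normSq_nonneg _
  nlinarith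


lemma realignment10 {NA NB : ℕ} (ρ : Matrix (Fin NA × Fin NB) (Fin NA × Fin NB) ℂ)
    (m : ℕ) (p : Fin m → ℝ)
    (ρA : Fin m → Matrix (Fin NA) (Fin NA) ℂ) (ρB : Fin m → Matrix (Fin NB) (Fin NB) ℂ)
    (hp : ∀ i, 0 < p i) (hp1 : ∑ i, p i = 1)
    (hdA : ∀ i, IsDensity (ρA i)) (hdB : ∀ i, IsDensity (ρB i))
    (hρsep : ρ = ∑ i, (p i : ℂ) • (ρA i ⊗ₖ ρB i))
    {k : ℕ} (μ : Fin k → ℝ)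
    (E : Fin k → Matrix (Fin NA) (Fin NA) ℂ) (F : Fin k → Matrix (Fin NB) (Fin NB) ℂ)
    (hE : ∀ a b, hsInner (E a) (E b) = if a = b then 1 else 0)
    (hF : ∀ a b, hsInner (F a) (F b) = if a = b then 1 else 0)
    (hρ : ρ = ∑ a, (μ a : ℂ) • (E a ⊗ₖ F a)) :
    ∑ a, μ a ≤ 1 := by
  have hext : ∀ a, (μ a : ℂ) = hsInner (E a ⊗ₖ F a) ρ := by
    intro a
    rw [hρ, hsInner_sum_right]
    rw [Finset.sum_eq_single a]
    · rw [hsInner_smul_right, hsInner_kron, hE a a, hF a a]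
      simp
    · intro b _ hba
      rw [hsInner_smul_right, hsInner_kron, hE a b, hF a b]
      simp [Ne.symm hba]
    · intro habs
      exact absurd (Finset.mem_univ a) habs
  have hform : ∀ a, (μ a : ℂ)
      = ∑ i, (p i : ℂ) * (hsInner (E a) (ρA i) * hsInner (F a) (ρB i)) := by
    intro a
    rw [hext a, hρsep, hsInner_sum_right]
    refine Finset.sum_congr rfl fun i _ => ?_
    rw [hsInner_smul_right, hsInner_kron]
  have hswap : ∑ a, μ a
      = ∑ i, p i * (∑ a, hsInner (E a) (ρA i) * hsInner (F a) (ρB i)).re := by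
    calc ∑ a, μ a = ∑ a, ((μ a : ℂ)).re := by simp
      _ = ∑ a, (∑ i, (p i : ℂ) * (hsInner (E a) (ρA i) * hsInner (F a) (ρB i))).re := by
          refine Finset.sum_congr rfl fun a _ => ?_
          rw [← hform a]
      _ = (∑ a, ∑ i, (p i : ℂ) * (hsInner (E a) (ρA i) * hsInner (F a) (ρB i))).re := by
          rw [Complex.re_sum]
      _ = (∑ i, (p i : ℂ) * ∑ a, hsInner (E a) (ρA i) * hsInner (F a) (ρB i)).re := by
          rw [Finset.sum_comm]
          congr 1
          refine Finset.sum_congr rfl fun i _ => ?_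
          rw [Finset.mul_sum]
      _ = ∑ i, ((p i : ℂ) * ∑ a, hsInner (E a) (ρA i) * hsInner (F a) (ρB i)).re := by
          rw [Complex.re_sum]
      _ = _ := by
          refine Finset.sum_congr rfl fun i _ => ?_
          rw [Complex.re_ofReal_mul]
  rw [hswap]
  calc ∑ i, p i * (∑ a, hsInner (E a) (ρA i) * hsInner (F a) (ρB i)).re
      ≤ ∑ i, p i * 1 := by
        refine Finset.sum_le_sum fun i _ => ?_
        refine mul_le_mul_of_nonneg_left ?_ (le_of_lt (hp i))
        refine cauchy10 _ _ ?_ ?_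
        · exact le_trans (bessel10 E hE (ρA i))
            (density_hsInner_le_one (hdA i).1 (hdA i).2)
        · exact le_trans (bessel10 F hF (ρB i))
            (density_hsInner_le_one (hdB i).1 (hdB i).2)
    _ = 1 := by simp only [mul_one]; exact hp1


/-- For a separable state, the elementary symmetric polynomial of degree l in the Schmidt
coefficients is at most C(d,l)·(1/d)^l. -/
theorem stmt10_esymm_schmidt_coefficients_bound {NA NB : ℕ} (hA : 2 ≤ NA) (hB : 2 ≤ NB)
    (ρ : Matrix (Fin NA × Fin NB) (Fin NA × Fin NB) ℂ)
    (hsep : IsSeparableState ρ)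
    (μ : Fin (min (NA ^ 2) (NB ^ 2)) → ℝ)
    (E : Fin (min (NA ^ 2) (NB ^ 2)) → Matrix (Fin NA) (Fin NA) ℂ)
    (F : Fin (min (NA ^ 2) (NB ^ 2)) → Matrix (Fin NB) (Fin NB) ℂ)
    (hS : SchmidtDecomp ρ μ E F) :
    ∀ l : ℕ, 1 ≤ l → l ≤ min (NA ^ 2) (NB ^ 2) →
      ∑ s ∈ Finset.univ.powersetCard l, ∏ a ∈ s, μ a
        ≤ ((min (NA ^ 2) (NB ^ 2)).choose l : ℝ)
          * (1 / (min (NA ^ 2) (NB ^ 2) : ℝ)) ^ l := by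
  intro l hl hld
  obtain ⟨hμ, hE, hF, hρ⟩ := hS
  obtain ⟨m, p, ρA, ρB, hp, hp1, hdA, hdB, hρsep⟩ := hsep
  have hsum : ∑ a, μ a ≤ 1 := realignment10 ρ m p ρA ρB hp hp1 hdA hdB hρsep μ E F hE hF hρ
  have hcard : (Finset.univ : Finset (Fin (min (NA ^ 2) (NB ^ 2)))).card = min (NA ^ 2) (NB ^ 2) := by
    simp
  have hmain := esym10_main_bound μ hμ Finset.univ l hl (by rw [hcard]; exact hld)
  rw [hcard] at hmain
  have hd0 : (0:ℝ) < min (NA ^ 2) (NB ^ 2) := by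
    have : 0 < min (NA ^ 2) (NB ^ 2) := lt_of_lt_of_le (Nat.lt_of_lt_of_le Nat.zero_lt_one hl) hld
    exact_mod_cast this
  have hcast : ((min (NA ^ 2) (NB ^ 2) : ℕ) : ℝ) = min ((NA:ℝ) ^ 2) ((NB:ℝ) ^ 2) := by
    push_cast
    rfl
  rw [← hcast]
  refine le_trans (show (∑ s ∈ Finset.univ.powersetCard l, ∏ a ∈ s, μ a) ≤ _ from hmain) ?_
  refine mul_le_mul_of_nonneg_left ?_ (by positivity)
  refine pow_le_pow_left₀ (div_nonneg (Finset.sum_nonneg fun a _ => hμ a) hd0.le) ?_ l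
  exact (div_le_div_iff_of_pos_right hd0).mpr hsum
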